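/- arXiv:1510.08207 — 2 statements merged into one kernel-verified Lean document; each statement's English description precedes it below -/
import Mathlib

section
/- Let R be a finite (not necessarily unital) ring with |Cent(R)| = 5. If S and T are any two distinct proper centralizers of R (elements of Cent(R) other than R), then |S|·|T|/|R| ≤ |Z(R)| ≤ |R|/6. -/
/-- The centralizer of `r` in a (not necessarily unital) ring: `{s | r*s = s*r}`. -/
def rCentralizer {R : Type*} [NonUnitalRing R] (r : R) : Set R := {s | r * s = s * r}

/-- The set of all centralizers of elements of `R`. -/
def Cent (R : Type*) [NonUnitalRing R] : Set (Set R) :=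
  Set.range (fun r : R => rCentralizer r)

/-- The center of a (not necessarily unital) ring, as a set. -/
def rCenter (R : Type*) [NonUnitalRing R] : Set R := {s | ∀ r : R, r * s = s * r}

section Aux

variable {R : Type*} [NonUnitalRing R]

lemma mem_cent_iff {x y : R} : y ∈ rCentralizer x ↔ x * y = y * x := Iff.rfl

lemma cent_comm {x y : R} : y ∈ rCentralizer x ↔ x ∈ rCentralizer y :=
  ⟨Eq.symm, Eq.symm⟩

lemma self_mem_cent (x : R) : x ∈ rCentralizer x := rfl

lemma zero_mem_cent (x : R) : (0 : R) ∈ rCentralizer x := by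
  show x * 0 = 0 * x; rw [mul_zero, zero_mul]

lemma sub_mem_cent {x a b : R} (ha : a ∈ rCentralizer x) (hb : b ∈ rCentralizer x) :
    a - b ∈ rCentralizer x := by
  have ha' : x * a = a * x := ha
  have hb' : x * b = b * x := hb
  show x * (a - b) = (a - b) * x
  rw [mul_sub, sub_mul, ha', hb']

lemma add_mem_cent {x a b : R} (ha : a ∈ rCentralizer x) (hb : b ∈ rCentralizer x) :
    a + b ∈ rCentralizer x := by
  have ha' : x * a = a * x := ha
  have hb' : x * b = b * x := hb
  show x * (a + b) = (a + b) * x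
  rw [mul_add, add_mul, ha', hb']

lemma neg_mem_cent {x a : R} (ha : a ∈ rCentralizer x) : -a ∈ rCentralizer x := by
  have ha' : x * a = a * x := ha
  show x * (-a) = (-a) * x
  rw [mul_neg, neg_mul, ha']

lemma zero_mem_center : (0 : R) ∈ rCenter R := by
  intro r; rw [mul_zero, zero_mul]

lemma center_subset_cent (x : R) : rCenter R ⊆ rCentralizer x := by
  intro s hs; exact hs x

lemma cent_eq_univ_iff {x : R} : rCentralizer x = Set.univ ↔ x ∈ rCenter R := by
  constructor
  · intro h r
    have hr : r ∈ rCentralizer x := h ▸ Set.mem_univ r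
    exact hr.symm
  · intro h
    ext s
    simp only [Set.mem_univ, iff_true]
    exact (h s).symm

lemma univ_mem_Cent : Set.univ ∈ Cent R :=
  ⟨0, cent_eq_univ_iff.mpr zero_mem_center⟩

lemma cent_mem_Cent (x : R) : rCentralizer x ∈ Cent R := ⟨x, rfl⟩

lemma cent_ne_univ {x : R} (hx : x ∉ rCenter R) : rCentralizer x ≠ Set.univ :=
  fun h => hx (cent_eq_univ_iff.mp h)

lemma cent_congr {a b : R} (h : a - b ∈ rCenter R) : rCentralizer a = rCentralizer b := by
  ext y
  have hy : y * (a - b) = (a - b) * y := h y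
  have key : a * y - b * y = y * a - y * b := by
    rw [← sub_mul, ← mul_sub]; exact hy.symm
  constructor
  · intro h1
    have h1' : a * y = y * a := h1
    show b * y = y * b
    have : b * y = a * y - (a * y - b * y) := by abel
    rw [this, key, h1']; abel
  · intro h1
    have h1' : b * y = y * b := h1
    show a * y = y * a
    have : a * y = b * y + (a * y - b * y) := by abel
    rw [this, key, h1']; abel

lemma subClosed_of_mem_Cent {D : Set R} (hD : D ∈ Cent R) :
    ∀ a ∈ D, ∀ b ∈ D, a - b ∈ D := by
  obtain ⟨r, rfl⟩ := hD
  exact fun a ha b hb => sub_mem_cent ha hb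

lemma two_cover {A B : Set R}
    (hA : ∀ a ∈ A, ∀ b ∈ A, a - b ∈ A) (hB : ∀ a ∈ B, ∀ b ∈ B, a - b ∈ B)
    (hcov : ∀ x : R, x ∈ A ∨ x ∈ B) (hAu : A ≠ Set.univ) (hBu : B ≠ Set.univ) : False := by
  obtain ⟨u, hu⟩ : ∃ u, u ∉ A := by
    by_contra h; push_neg at h; exact hAu (Set.eq_univ_of_forall h)
  obtain ⟨v, hv⟩ : ∃ v, v ∉ B := by
    by_contra h; push_neg at h; exact hBu (Set.eq_univ_of_forall h)
  have huB : u ∈ B := (hcov u).resolve_left hu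
  have hvA : v ∈ A := (hcov v).resolve_right hv
  rcases hcov (u + v) with h | h
  · exact hu (by simpa using hA _ h _ hvA)
  · exact hv (by simpa using hB _ h _ huB)

/-- The additive subgroup underlying a centralizer. -/
def centAdd (x : R) : AddSubgroup R where
  carrier := rCentralizer x
  zero_mem' := zero_mem_cent x
  add_mem' := add_mem_cent
  neg_mem' := neg_mem_cent

/-- The additive subgroup underlying the center. -/
def centerAdd (R : Type*) [NonUnitalRing R] : AddSubgroup R where
  carrier := rCenter R
  zero_mem' := zero_mem_center
  add_mem' := by
    intro a b ha hb r
    rw [mul_add, add_mul, ha r, hb r]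
  neg_mem' := by
    intro a ha r
    rw [mul_neg, neg_mul, ha r]

lemma centerAdd_le_centAdd (x : R) : centerAdd R ≤ centAdd x :=
  fun s hs => hs x

end Aux

section Main

variable {R : Type*} [NonUnitalRing R] [Finite R]

lemma Cent_finite : (Cent R).Finite := Set.finite_range _

lemma P_ncard (h5 : (Cent R).ncard = 5) : (Cent R \ {Set.univ}).ncard = 4 := by
  rw [Set.ncard_diff_singleton_of_mem univ_mem_Cent, h5]

lemma mem_P {D : Set R} (hD : D ∈ Cent R) (hDu : D ≠ Set.univ) :
    D ∈ Cent R \ {Set.univ} := ⟨hD, by simpa using hDu⟩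

lemma three_mem (h5 : (Cent R).ncard = 5) {z : R} (hz : z ∉ rCenter R)
    {D1 D2 D3 : Set R} (h1 : D1 ∈ Cent R) (h2 : D2 ∈ Cent R) (h3 : D3 ∈ Cent R)
    (h1u : D1 ≠ Set.univ) (h2u : D2 ≠ Set.univ) (h3u : D3 ≠ Set.univ)
    (h12 : D1 ≠ D2) (h13 : D1 ≠ D3) (h23 : D2 ≠ D3)
    (hz1 : z ∈ D1) (hz2 : z ∈ D2) (hz3 : z ∈ D3) : False := by
  set P : Set (Set R) := Cent R \ {Set.univ} with hPdef
  have hPfin : P.Finite := (Cent_finite).diff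
  have hP4 : P.ncard = 4 := P_ncard h5
  have hsub : ({D1, D2, D3} : Set (Set R)) ⊆ P := by
    intro X hX
    rcases hX with rfl | rfl | rfl
    · exact mem_P h1 h1u
    · exact mem_P h2 h2u
    · exact mem_P h3 h3u
  have h3card : ({D1, D2, D3} : Set (Set R)).ncard = 3 := by
    rw [Set.ncard_insert_of_notMem (by simp [h12, h13]) (Set.toFinite _),
      Set.ncard_pair h23]
  have hrest : (P \ {D1, D2, D3}).ncard = 1 := by
    rw [Set.ncard_diff hsub (Set.toFinite _), hP4, h3card]
  obtain ⟨D4, hD4⟩ := Set.ncard_eq_one.mp hrest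
  have hD4P : D4 ∈ P := by
    have : D4 ∈ P \ ({D1, D2, D3} : Set (Set R)) := by rw [hD4]; rfl
    exact this.1
  have hD4C : D4 ∈ Cent R := hD4P.1
  have hD4u : D4 ≠ Set.univ := by simpa using hD4P.2
  have cover : ∀ x : R, x ∈ rCentralizer z ∨ x ∈ D4 := by
    intro x
    by_cases hx : x ∈ rCentralizer z
    · exact Or.inl hx
    · right
      have hxnz : x ∉ rCenter R := fun h => hx (center_subset_cent z h)
      have hzx : z ∉ rCentralizer x := fun h => hx (cent_comm.mp h)
      have hCx : rCentralizer x ∈ P \ ({D1, D2, D3} : Set (Set R)) := by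
        refine ⟨mem_P (cent_mem_Cent x) (cent_ne_univ hxnz), ?_⟩
        simp only [Set.mem_insert_iff, Set.mem_singleton_iff]
        push_neg
        refine ⟨?_, ?_, ?_⟩
        · rintro rfl; exact hzx hz1
        · rintro rfl; exact hzx hz2
        · rintro rfl; exact hzx hz3
      rw [hD4] at hCx
      have hCxD4 : rCentralizer x = D4 := hCx
      exact hCxD4 ▸ self_mem_cent x
  exact two_cover (fun a ha b hb => sub_mem_cent ha hb) (subClosed_of_mem_Cent hD4C)
    cover (cent_ne_univ hz) hD4u

lemma aux_false (h5 : (Cent R).ncard = 5) {S T : Set R}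
    (hS : S ∈ Cent R) (hT : T ∈ Cent R)
    (hSu : S ≠ Set.univ) (hTu : T ≠ Set.univ) (hST : S ≠ T)
    {z : R} (hz : z ∉ rCenter R) (hzS : z ∈ S) (hzT : z ∈ T)
    (hCz : rCentralizer z = S) : False := by
  obtain ⟨b, hbT⟩ := hT
  have hbT : rCentralizer b = T := hbT
  have hbnz : b ∉ rCenter R := fun h => hTu (hbT ▸ cent_eq_univ_iff.mpr h)
  have hbS : b ∈ S := by
    have hzb : z ∈ rCentralizer b := hbT ▸ hzT
    exact hCz ▸ cent_comm.mp hzb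
  have hbT' : b ∈ T := hbT ▸ self_mem_cent b
  set P : Set (Set R) := Cent R \ {Set.univ} with hPdef
  have hPfin : P.Finite := (Cent_finite).diff
  have hP4 : P.ncard = 4 := P_ncard h5
  have hsubST : ({S, T} : Set (Set R)) ⊆ P := by
    intro X hX
    rcases hX with rfl | rfl
    · exact mem_P hS hSu
    · exact mem_P (hbT ▸ cent_mem_Cent b) hTu
  have hrest : (P \ ({S, T} : Set (Set R))).ncard = 2 := by
    rw [Set.ncard_diff hsubST (Set.toFinite _), hP4, Set.ncard_pair hST]
  obtain ⟨Dp, Dq, hpq, hPQ⟩ := Set.ncard_eq_two.mp hrest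
  have hDpP : Dp ∈ P \ ({S, T} : Set (Set R)) := by rw [hPQ]; exact Set.mem_insert _ _
  have hDqP : Dq ∈ P \ ({S, T} : Set (Set R)) := by
    rw [hPQ]; exact Set.mem_insert_of_mem _ rfl
  have hDpC : Dp ∈ Cent R := hDpP.1.1
  have hDqC : Dq ∈ Cent R := hDqP.1.1
  have hDpu : Dp ≠ Set.univ := by simpa using hDpP.1.2
  have hDqu : Dq ≠ Set.univ := by simpa using hDqP.1.2
  have hDpS : Dp ≠ S := fun h => hDpP.2 (by simp [h])
  have hDpT : Dp ≠ T := fun h => hDpP.2 (by simp [h])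
  have hDqS : Dq ≠ S := fun h => hDqP.2 (by simp [h])
  have hDqT : Dq ≠ T := fun h => hDqP.2 (by simp [h])
  have hzDp : z ∉ Dp := fun h =>
    three_mem h5 hz hS (hbT ▸ cent_mem_Cent b) hDpC hSu hTu hDpu hST hDpS.symm hDpT.symm
      hzS hzT h
  have hzDq : z ∉ Dq := fun h =>
    three_mem h5 hz hS (hbT ▸ cent_mem_Cent b) hDqC hSu hTu hDqu hST hDqS.symm hDqT.symm
      hzS hzT h
  have hbDp : b ∉ Dp := fun h =>
    three_mem h5 hbnz hS (hbT ▸ cent_mem_Cent b) hDpC hSu hTu hDpu hST hDpS.symm hDpT.symm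
      hbS hbT' h
  have hbDq : b ∉ Dq := fun h =>
    three_mem h5 hbnz hS (hbT ▸ cent_mem_Cent b) hDqC hSu hTu hDqu hST hDqS.symm hDqT.symm
      hbS hbT' h
  have hZS : rCenter R ⊆ S := by
    obtain ⟨a, ha⟩ := hS; exact ha ▸ center_subset_cent a
  have hZT : rCenter R ⊆ T := hbT ▸ center_subset_cent b
  have cover : ∀ x : R, x ∉ Dp → x ∉ Dq → x ∈ S ∩ T := by
    intro x hxp hxq
    by_cases hxc : x ∈ rCenter R
    · exact ⟨hZS hxc, hZT hxc⟩
    · have hCx4 : rCentralizer x = S ∨ rCentralizer x = T ∨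
          rCentralizer x = Dp ∨ rCentralizer x = Dq := by
        by_cases h1 : rCentralizer x ∈ ({S, T} : Set (Set R))
        · rcases h1 with h1 | h1
          · exact Or.inl h1
          · exact Or.inr (Or.inl h1)
        · have : rCentralizer x ∈ P \ ({S, T} : Set (Set R)) :=
            ⟨mem_P (cent_mem_Cent x) (cent_ne_univ hxc), h1⟩
          rw [hPQ] at this
          rcases this with h | h
          · exact Or.inr (Or.inr (Or.inl h))
          · exact Or.inr (Or.inr (Or.inr h))
      have hxz : x ∈ rCentralizer z := by
        by_contra hxz
        have hzx : z ∉ rCentralizer x := fun h => hxz (cent_comm.mp h)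
        rcases hCx4 with h | h | h | h
        · exact hzx (h ▸ hzS)
        · exact hzx (h ▸ hzT)
        · exact hxp (h ▸ self_mem_cent x)
        · exact hxq (h ▸ self_mem_cent x)
      have hxb : x ∈ rCentralizer b := by
        by_contra hxb
        have hbx : b ∉ rCentralizer x := fun h => hxb (cent_comm.mp h)
        rcases hCx4 with h | h | h | h
        · exact hbx (h ▸ hbS)
        · exact hbx (h ▸ hbT')
        · exact hxp (h ▸ self_mem_cent x)
        · exact hxq (h ▸ self_mem_cent x)
      exact ⟨hCz ▸ hxz, hbT ▸ hxb⟩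
  have hHsub : ∀ a ∈ S ∩ T, ∀ c ∈ S ∩ T, a - c ∈ S ∩ T := by
    intro a ha c hc
    exact ⟨subClosed_of_mem_Cent hS a ha.1 c hc.1,
      subClosed_of_mem_Cent (hbT ▸ cent_mem_Cent b) a ha.2 c hc.2⟩
  have hHu : S ∩ T ≠ Set.univ := by
    intro h
    apply hSu
    apply Set.eq_univ_of_univ_subset
    rw [← h]
    exact Set.inter_subset_left
  obtain ⟨p, hpDp, hpH, hpDq⟩ : ∃ p ∈ Dp, p ∉ S ∩ T ∧ p ∉ Dq := by
    by_contra h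
    push_neg at h
    have cover2 : ∀ x : R, x ∈ S ∩ T ∨ x ∈ Dq := by
      intro x
      by_cases hq : x ∈ Dq
      · exact Or.inr hq
      · by_cases hp : x ∈ Dp
        · by_cases hH : x ∈ S ∩ T
          · exact Or.inl hH
          · exact Or.inr (h x hp hH)
        · exact Or.inl (cover x hp hq)
    exact two_cover hHsub (subClosed_of_mem_Cent hDqC) cover2 hHu hDqu
  have hzp : z + p ∈ Dq := by
    by_cases h1 : z + p ∈ Dp
    · exact absurd (by simpa using subClosed_of_mem_Cent hDpC _ h1 _ hpDp) hzDp
    · by_cases h2 : z + p ∈ Dq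
      · exact h2
      · have hin : z + p ∈ S ∩ T := cover _ h1 h2
        exact absurd (by simpa using hHsub _ hin _ ⟨hzS, hzT⟩) hpH
  have hbp : b + p ∈ Dq := by
    by_cases h1 : b + p ∈ Dp
    · exact absurd (by simpa using subClosed_of_mem_Cent hDpC _ h1 _ hpDp) hbDp
    · by_cases h2 : b + p ∈ Dq
      · exact h2
      · have hin : b + p ∈ S ∩ T := cover _ h1 h2
        exact absurd (by simpa using hHsub _ hin _ ⟨hbS, hbT'⟩) hpH
  have hw : z - b ∈ Dq := by
    have := subClosed_of_mem_Cent hDqC _ hzp _ hbp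
    simpa using this
  have hwnz : z - b ∉ rCenter R := by
    intro h
    have hcc : rCentralizer z = rCentralizer b := cent_congr h
    exact hST (by rw [← hCz, hcc, hbT])
  exact three_mem h5 hwnz hS (hbT ▸ cent_mem_Cent b) hDqC hSu hTu hDqu hST hDqS.symm hDqT.symm
    (subClosed_of_mem_Cent hS z hzS b hbS)
    (subClosed_of_mem_Cent (hbT ▸ cent_mem_Cent b) z hzT b hbT') hw

lemma inter_eq_center (h5 : (Cent R).ncard = 5) {S T : Set R}
    (hS : S ∈ Cent R) (hT : T ∈ Cent R)
    (hSu : S ≠ Set.univ) (hTu : T ≠ Set.univ) (hST : S ≠ T) :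
    S ∩ T = rCenter R := by
  have hZS : rCenter R ⊆ S := by
    obtain ⟨a, ha⟩ := hS; exact ha ▸ center_subset_cent a
  have hZT : rCenter R ⊆ T := by
    obtain ⟨b, hb⟩ := hT; exact hb ▸ center_subset_cent b
  apply Set.Subset.antisymm
  · intro z hz
    by_contra hznZ
    by_cases h1 : rCentralizer z = S
    · exact aux_false h5 hS hT hSu hTu hST hznZ hz.1 hz.2 h1
    by_cases h2 : rCentralizer z = T
    · exact aux_false h5 hT hS hTu hSu (Ne.symm hST) hznZ hz.2 hz.1 h2
    · exact three_mem h5 hznZ hS hT (cent_mem_Cent z) hSu hTu (cent_ne_univ hznZ)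
        hST (fun h => h1 h.symm) (fun h => h2 h.symm) hz.1 hz.2 (self_mem_cent z)
  · intro z hz
    exact ⟨hZS hz, hZT hz⟩

end Main

section Count

variable {R : Type*} [NonUnitalRing R]

lemma card_centerAdd : Nat.card ↥(centerAdd R) = (rCenter R).ncard := by
  rw [← Nat.card_coe_set_eq]; rfl

lemma card_centAdd (x : R) : Nat.card ↥(centAdd x) = (rCentralizer x).ncard := by
  rw [← Nat.card_coe_set_eq]; rfl

lemma center_subset_of_mem {D : Set R} (hD : D ∈ Cent R) : rCenter R ⊆ D := by
  obtain ⟨x, hx⟩ := hD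
  have hx' : rCentralizer x = D := hx
  exact hx' ▸ center_subset_cent x

lemma exists_noncentral {D : Set R} (hD : D ∈ Cent R) (hDu : D ≠ Set.univ) :
    ∃ x, x ∈ D ∧ x ∉ rCenter R := by
  obtain ⟨x, hx⟩ := hD
  have hx' : rCentralizer x = D := hx
  exact ⟨x, hx' ▸ self_mem_cent x, fun h => hDu (hx' ▸ cent_eq_univ_iff.mpr h)⟩

lemma ncard_center_dvd {D : Set R} (hD : D ∈ Cent R) : (rCenter R).ncard ∣ D.ncard := by
  obtain ⟨x, hx⟩ := hD
  have hx' : rCentralizer x = D := hx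
  have h := AddSubgroup.card_dvd_of_le (centerAdd_le_centAdd x)
  rwa [card_centerAdd, card_centAdd, hx'] at h

lemma ncard_dvd_card {D : Set R} (hD : D ∈ Cent R) : D.ncard ∣ Nat.card R := by
  obtain ⟨x, hx⟩ := hD
  have hx' : rCentralizer x = D := hx
  have h := AddSubgroup.card_addSubgroup_dvd_card (centAdd x)
  rwa [card_centAdd, hx'] at h

lemma center_ncard_lt [Finite R] {D : Set R} (hD : D ∈ Cent R) (hDu : D ≠ Set.univ) :
    (rCenter R).ncard < D.ncard := by
  obtain ⟨x, hxD, hxZ⟩ := exists_noncentral hD hDu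
  refine Set.ncard_lt_ncard ?_ (Set.toFinite _)
  rw [Set.ssubset_def]
  exact ⟨center_subset_of_mem hD, fun h => hxZ (h hxD)⟩

lemma two_mul_le_aux {m n : ℕ} (h0 : 0 < m) (hd : m ∣ n) (hl : m < n) : 2 * m ≤ n := by
  obtain ⟨k, rfl⟩ := hd
  have hk2 : 2 ≤ k := by nlinarith
  nlinarith

lemma disj_of_inter_center {X Y : Set R} (h : X ∩ Y = rCenter R) :
    Disjoint (X \ rCenter R) (Y \ rCenter R) := by
  rw [Set.disjoint_left]
  rintro a ⟨haX, haZ⟩ ⟨haY, _⟩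
  exact haZ (h ▸ ⟨haX, haY⟩)

lemma prod_le [Finite R] (h5 : (Cent R).ncard = 5) {S T : Set R}
    (hS : S ∈ Cent R) (hT : T ∈ Cent R)
    (hSu : S ≠ Set.univ) (hTu : T ≠ Set.univ) (hST : S ≠ T) :
    S.ncard * T.ncard ≤ (rCenter R).ncard * Nat.card R := by
  classical
  have hint : S ∩ T = rCenter R := inter_eq_center h5 hS hT hSu hTu hST
  have h0S : (0 : R) ∈ S := by
    obtain ⟨a, ha⟩ := hS
    have ha' : rCentralizer a = S := ha
    exact ha' ▸ zero_mem_cent a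
  have h0T : (0 : R) ∈ T := by
    obtain ⟨b, hb⟩ := hT
    have hb' : rCentralizer b = T := hb
    exact hb' ▸ zero_mem_cent b
  have hsubS := subClosed_of_mem_Cent hS
  have hsubT := subClosed_of_mem_Cent hT
  have hex : ∀ x : R, ∃ p : ↥S × ↥T,
      (∃ s ∈ S, ∃ t ∈ T, s + t = x) → ((p.1 : R) + (p.2 : R) = x) := by
    intro x
    by_cases h : ∃ s ∈ S, ∃ t ∈ T, s + t = x
    · obtain ⟨s, hs, t, ht, hst⟩ := h
      exact ⟨(⟨s, hs⟩, ⟨t, ht⟩), fun _ => hst⟩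
    · exact ⟨(⟨0, h0S⟩, ⟨0, h0T⟩), fun hc => absurd hc h⟩
  choose σ hσ using hex
  have hmem : ∀ p : ↥S × ↥T,
      ((p.1 : R) - ((σ ((p.1 : R) + (p.2 : R))).1 : R)) ∈ rCenter R := by
    rintro ⟨s, t⟩
    have hσx : ((σ ((s : R) + (t : R))).1 : R) + ((σ ((s : R) + (t : R))).2 : R)
        = (s : R) + (t : R) := hσ _ ⟨s, s.2, t, t.2, rfl⟩
    have hdiff : (s : R) - ((σ ((s : R) + (t : R))).1 : R)
        = ((σ ((s : R) + (t : R))).2 : R) - (t : R) := by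
      rw [sub_eq_sub_iff_add_eq_add]
      conv_lhs => rw [← hσx]
      exact add_comm _ _
    rw [← hint]
    constructor
    · exact hsubS _ s.2 _ (σ _).1.2
    · rw [hdiff]
      exact hsubT _ (σ _).2.2 _ t.2
  set f : ↥S × ↥T → R × ↥(rCenter R) := fun p =>
    ((p.1 : R) + (p.2 : R), ⟨_, hmem p⟩) with hf
  have hinj : Function.Injective f := by
    rintro ⟨s, t⟩ ⟨s', t'⟩ h
    have h1 : (s : R) + (t : R) = (s' : R) + (t' : R) := congrArg Prod.fst h
    have h2 : ((f (s, t)).2 : R) = ((f (s', t')).2 : R) := by rw [h]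
    simp only [hf] at h2
    rw [h1] at h2
    have hss : (s : R) = (s' : R) := sub_left_inj.mp h2
    have htt : (t : R) = (t' : R) := by
      rw [hss] at h1
      exact add_left_cancel h1
    simp only [Prod.mk.injEq]
    exact ⟨Subtype.ext hss, Subtype.ext htt⟩
  have hcard := Nat.card_le_card_of_injective f hinj
  rw [Nat.card_prod, Nat.card_prod, Nat.card_coe_set_eq, Nat.card_coe_set_eq,
    Nat.card_coe_set_eq] at hcard
  rw [mul_comm ((rCenter R).ncard)]
  exact hcard

lemma six_card [Finite R] (h5 : (Cent R).ncard = 5) {S T : Set R}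
    (hS : S ∈ Cent R) (hT : T ∈ Cent R)
    (hSu : S ≠ Set.univ) (hTu : T ≠ Set.univ) (hST : S ≠ T) :
    6 * (rCenter R).ncard ≤ Nat.card R := by
  set m := (rCenter R).ncard with hm
  set N := Nat.card R with hN
  have hm0 : 0 < m := (Set.ncard_pos (Set.toFinite _)).mpr ⟨0, zero_mem_center⟩
  -- get the other two proper centralizers
  set P : Set (Set R) := Cent R \ {Set.univ} with hPdef
  have hP4 : P.ncard = 4 := P_ncard h5
  have hsubST : ({S, T} : Set (Set R)) ⊆ P := by
    intro X hX
    rcases hX with rfl | rfl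
    · exact mem_P hS hSu
    · exact mem_P hT hTu
  have hrest : (P \ ({S, T} : Set (Set R))).ncard = 2 := by
    rw [Set.ncard_diff hsubST (Set.toFinite _), hP4, Set.ncard_pair hST]
  obtain ⟨Dp, Dq, hpq, hPQ⟩ := Set.ncard_eq_two.mp hrest
  have hDpP : Dp ∈ P \ ({S, T} : Set (Set R)) := by rw [hPQ]; exact Set.mem_insert _ _
  have hDqP : Dq ∈ P \ ({S, T} : Set (Set R)) := by
    rw [hPQ]; exact Set.mem_insert_of_mem _ rfl
  have hDpC : Dp ∈ Cent R := hDpP.1.1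
  have hDqC : Dq ∈ Cent R := hDqP.1.1
  have hDpu : Dp ≠ Set.univ := by simpa using hDpP.1.2
  have hDqu : Dq ≠ Set.univ := by simpa using hDqP.1.2
  have hDpS : Dp ≠ S := fun h => hDpP.2 (by simp [h])
  have hDpT : Dp ≠ T := fun h => hDpP.2 (by simp [h])
  have hDqS : Dq ≠ S := fun h => hDqP.2 (by simp [h])
  have hDqT : Dq ≠ T := fun h => hDqP.2 (by simp [h])
  -- lower bounds on each centralizer
  have hbound : ∀ D : Set R, D ∈ Cent R → D ≠ Set.univ → 2 * m ≤ D.ncard := by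
    intro D hD hDu
    exact two_mul_le_aux hm0 (ncard_center_dvd hD) (center_ncard_lt hD hDu)
  -- disjoint union counting
  have dST := disj_of_inter_center (inter_eq_center h5 hS hT hSu hTu hST)
  have dSp := disj_of_inter_center (inter_eq_center h5 hS hDpC hSu hDpu (Ne.symm hDpS))
  have dSq := disj_of_inter_center (inter_eq_center h5 hS hDqC hSu hDqu (Ne.symm hDqS))
  have dTp := disj_of_inter_center (inter_eq_center h5 hT hDpC hTu hDpu (Ne.symm hDpT))
  have dTq := disj_of_inter_center (inter_eq_center h5 hT hDqC hTu hDqu (Ne.symm hDqT))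
  have dpq := disj_of_inter_center (inter_eq_center h5 hDpC hDqC hDpu hDqu hpq)
  set A := S \ rCenter R with hA
  set B := T \ rCenter R with hB
  set C := Dp \ rCenter R with hC
  set D := Dq \ rCenter R with hD'
  have hU : (A ∪ B ∪ C ∪ D).ncard = A.ncard + B.ncard + C.ncard + D.ncard := by
    rw [Set.ncard_union_eq (Disjoint.union_left (Disjoint.union_left dSq dTq) dpq)
      (Set.toFinite _) (Set.toFinite _),
      Set.ncard_union_eq (Disjoint.union_left dSp dTp) (Set.toFinite _) (Set.toFinite _),
      Set.ncard_union_eq dST (Set.toFinite _) (Set.toFinite _)]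
  have hUuniv : (A ∪ B ∪ C ∪ D).ncard ≤ (Set.univ \ rCenter R).ncard := by
    apply Set.ncard_le_ncard _ (Set.toFinite _)
    intro x hx
    rcases hx with ((h | h) | h) | h
    · exact ⟨Set.mem_univ _, h.2⟩
    · exact ⟨Set.mem_univ _, h.2⟩
    · exact ⟨Set.mem_univ _, h.2⟩
    · exact ⟨Set.mem_univ _, h.2⟩
  have hAc : A.ncard = S.ncard - m :=
    Set.ncard_diff (center_subset_of_mem hS) (Set.toFinite _)
  have hBc : B.ncard = T.ncard - m :=
    Set.ncard_diff (center_subset_of_mem hT) (Set.toFinite _)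
  have hCc : C.ncard = Dp.ncard - m :=
    Set.ncard_diff (center_subset_of_mem hDpC) (Set.toFinite _)
  have hDc : D.ncard = Dq.ncard - m :=
    Set.ncard_diff (center_subset_of_mem hDqC) (Set.toFinite _)
  have hUc : (Set.univ \ rCenter R).ncard = N - m := by
    rw [Set.ncard_diff (Set.subset_univ _) (Set.toFinite _), Set.ncard_univ]
  have hSb := hbound S hS hSu
  have hTb := hbound T hT hTu
  have hPb := hbound Dp hDpC hDpu
  have hQb := hbound Dq hDqC hDqu
  have hmN : m ≤ N := by
    have := Set.ncard_le_ncard (Set.subset_univ (rCenter R)) (Set.toFinite _)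
    rwa [Set.ncard_univ] at this
  have h5m : 5 * m ≤ N := by
    have h1 : 4 * m ≤ N - m := by
      calc 4 * m = m + m + m + m := by ring
        _ ≤ A.ncard + B.ncard + C.ncard + D.ncard := by
            rw [hAc, hBc, hCc, hDc]; omega
        _ = (A ∪ B ∪ C ∪ D).ncard := hU.symm
        _ ≤ (Set.univ \ rCenter R).ncard := hUuniv
        _ = N - m := hUc
    omega
  have hne : N ≠ 5 * m := by
    intro hNeq
    obtain ⟨k, hk⟩ := ncard_center_dvd hS
    have hdvd5 : k ∣ 5 := by
      have h1 : S.ncard ∣ N := ncard_dvd_card hS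
      rw [hNeq, hk] at h1
      have h2 : m * k ∣ m * 5 := by rwa [mul_comm 5 m] at h1
      exact (Nat.mul_dvd_mul_iff_left hm0).mp h2
    have h5p : Nat.Prime 5 := by norm_num
    rcases (Nat.Prime.eq_one_or_self_of_dvd h5p k hdvd5) with h | h
    · -- S.ncard = m, so S = rCenter R, contradicting a noncentral element
      have hSm : S.ncard ≤ m := by rw [hk, h, mul_one]
      have hZeqS : rCenter R = S :=
        Set.eq_of_subset_of_ncard_le (center_subset_of_mem hS) hSm (Set.toFinite _)
      obtain ⟨x, hxS, hxZ⟩ := exists_noncentral hS hSu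
      exact hxZ (hZeqS ▸ hxS)
    · -- S.ncard = 5m = N, so S = univ
      have hSN : (Set.univ : Set R).ncard ≤ S.ncard := by
        rw [Set.ncard_univ, ← hN, hNeq, hk, h, mul_comm]
      have : S = Set.univ :=
        Set.eq_of_subset_of_ncard_le (Set.subset_univ _) hSN (Set.toFinite _)
      exact hSu this
  have hmdvd : m ∣ N := by
    have h := AddSubgroup.card_addSubgroup_dvd_card (centerAdd R)
    rwa [card_centerAdd] at h
  obtain ⟨n, hn⟩ := hmdvd
  have h5n : 5 ≤ n := by
    have : m * 5 ≤ m * n := by rw [← hn, mul_comm m 5]; exact h5m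
    exact Nat.le_of_mul_le_mul_left this hm0
  have hn5 : n ≠ 5 := fun h => hne (by rw [hn, h, mul_comm])
  have h6n : 6 ≤ n := by omega
  calc 6 * m = m * 6 := by ring
    _ ≤ m * n := Nat.mul_le_mul_left m h6n
    _ = N := hn.symm

end Count

/-- In a finite `5`-centralizer ring, any two distinct proper centralizers `S`, `T`
satisfy `|S||T|/|R| ≤ |Z(R)| ≤ |R|/6`. -/
theorem five_centralizer_center_bounds (R : Type*) [NonUnitalRing R] [Finite R]
    (h5 : (Cent R).ncard = 5) (S T : Set R)
    (hS : S ∈ Cent R) (hT : T ∈ Cent R)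
    (hSu : S ≠ Set.univ) (hTu : T ≠ Set.univ) (hST : S ≠ T) :
    ((S.ncard : ℚ) * T.ncard) / (Nat.card R) ≤ ((rCenter R).ncard : ℚ) ∧
      ((rCenter R).ncard : ℚ) ≤ (Nat.card R : ℚ) / 6 := by
  have : Nonempty R := ⟨0⟩
  have hN0 : 0 < Nat.card R := Nat.card_pos
  have hN0' : (0 : ℚ) < (Nat.card R : ℚ) := by exact_mod_cast hN0
  constructor
  · rw [div_le_iff₀ hN0']
    have h := prod_le h5 hS hT hSu hTu hST
    exact_mod_cast h
  · rw [le_div_iff₀ (by norm_num : (0 : ℚ) < 6)]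
    have h := six_card h5 hS hT hSu hTu hST
    have h' : (rCenter R).ncard * 6 ≤ Nat.card R := by omega
    exact_mod_cast h'
end

section
/- Let R be a finite (not necessarily unital) ring. Then |Cent(R)| = 5 if and only if the additive quotient group R/Z(R) is isomorphic (as an additive group) to ℤ_3 × ℤ_3. -/
/-- The center of a (not necessarily unital) ring, as an additive subgroup. -/
def centerAddSubgroup (R : Type*) [NonUnitalRing R] : AddSubgroup R where
  carrier := {s | ∀ r : R, r * s = s * r}
  zero_mem' := by intro r; rw [mul_zero, zero_mul]
  add_mem' := by intro a b ha hb r; rw [mul_add, add_mul, ha r, hb r]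
  neg_mem' := by intro a ha r; rw [mul_neg, neg_mul, ha r]

section Basic
variable {R : Type*} [NonUnitalRing R]

/-- centralizer as an additive subgroup -/
def Csub (r : R) : AddSubgroup R where
  carrier := rCentralizer r
  zero_mem' := by show r * 0 = 0 * r; rw [mul_zero, zero_mul]
  add_mem' := by intro a b ha hb; show r * (a+b) = (a+b) * r
                 have ha : r * a = a * r := ha
                 have hb : r * b = b * r := hb
                 rw [mul_add, add_mul, ha, hb]
  neg_mem' := by intro a ha; show r * (-a) = (-a) * r
                 have ha : r * a = a * r := ha
                 rw [mul_neg, neg_mul, ha]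

lemma mem_C {r s : R} : s ∈ rCentralizer r ↔ r * s = s * r := Iff.rfl

lemma C_symm {r s : R} : s ∈ rCentralizer r ↔ r ∈ rCentralizer s := eq_comm

lemma center_subset_C (r : R) {s : R} (hs : s ∈ centerAddSubgroup R) :
    s ∈ rCentralizer r := hs r

lemma self_mem_C (r : R) : r ∈ rCentralizer r := rfl

lemma C_eq_univ_iff {r : R} : rCentralizer r = Set.univ ↔ r ∈ centerAddSubgroup R := by
  constructor
  · intro h s
    have : s ∈ rCentralizer r := h ▸ Set.mem_univ s
    exact (mem_C.1 this).symm
  · intro h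
    ext s
    simp only [Set.mem_univ, iff_true]
    exact (h s).symm

lemma C_congr {r r' : R} (h : r - r' ∈ centerAddSubgroup R) :
    rCentralizer r = rCentralizer r' := by
  ext s
  have key : r * s - r' * s = s * r - s * r' := by
    rw [← sub_mul, ← mul_sub, h s]
  constructor
  · intro hs
    have hs : r * s = s * r := hs
    rw [hs] at key
    exact mem_C.2 (sub_right_injective key)
  · intro hs
    have hs : r' * s = s * r' := hs
    rw [← hs] at key
    exact mem_C.2 (sub_left_injective key)

end Basic

section Z3
open AddSubgroup
abbrev V3 := ZMod 3 × ZMod 3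

lemma three_smul_eq_zero : ∀ v : V3, (3:ℤ) • v = 0 := by decide

lemma mem_zmultiples_iff' {v w : V3} :
    w ∈ zmultiples v ↔ (w = 0 ∨ w = v ∨ w = v + v) := by
  constructor
  · rintro ⟨k, hk⟩
    have hk' : k • v = w := hk
    have h1 : w = (k % 3) • v := by
      rw [show k % 3 = k - 3 * (k / 3) by omega, sub_zsmul, mul_comm (3:ℤ) (k / 3),
        mul_zsmul, three_smul_eq_zero, smul_zero, hk']
      abel
    have h2 : k % 3 = 0 ∨ k % 3 = 1 ∨ k % 3 = 2 := by omega
    rcases h2 with h | h | h <;> rw [h] at h1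
    · left; rw [h1, zero_zsmul]
    · right; left; rw [h1, one_zsmul]
    · right; right; rw [h1, two_zsmul]
  · rintro (h | h | h) <;> rw [h]
    · exact ⟨0, zero_zsmul v⟩
    · exact ⟨1, one_zsmul v⟩
    · exact ⟨2, two_zsmul v⟩

lemma span_lemma : ∀ v w x : V3, v ≠ 0 → ¬(w = 0 ∨ w = v ∨ w = v + v) →
    ∃ a b : Fin 3, (a : ℕ) • v + (b : ℕ) • w = x := by decide

lemma proper_subgroup_eq_zmultiples (T : AddSubgroup V3) (v : V3) (hv : v ∈ T)
    (hv0 : v ≠ 0) (hT : T ≠ ⊤) : T = zmultiples v := by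
  by_contra hne
  have hle : zmultiples v ≤ T := (zmultiples_le).2 hv
  obtain ⟨w, hwT, hwv⟩ : ∃ w ∈ T, w ∉ zmultiples v := by
    by_contra h
    push_neg at h
    exact hne (le_antisymm (fun x hx => h x hx) hle)
  rw [mem_zmultiples_iff'] at hwv
  apply hT
  rw [eq_top_iff]
  intro x _
  obtain ⟨a, b, hab⟩ := span_lemma v w x hv0 hwv
  rw [← hab]
  exact T.add_mem (T.nsmul_mem hv _) (T.nsmul_mem hwT _)

set_option synthInstance.maxSize 400 in
lemma lines_classify : ∀ u : V3, u ≠ 0 →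
    zmultiples u = zmultiples ((1,0) : V3) ∨ zmultiples u = zmultiples ((0,1) : V3) ∨
    zmultiples u = zmultiples ((1,1) : V3) ∨ zmultiples u = zmultiples ((1,2) : V3) := by
  have key : ∀ u v : V3, (∀ w : V3, (w = 0 ∨ w = u ∨ w = u + u) ↔ (w = 0 ∨ w = v ∨ w = v + v)) →
      zmultiples u = zmultiples v := by
    intro u v h
    ext w
    rw [mem_zmultiples_iff', mem_zmultiples_iff', h]
  have d : ∀ u : V3, u ≠ 0 →
      (∀ w : V3, (w = 0 ∨ w = u ∨ w = u + u) ↔ (w = 0 ∨ w = (1,0) ∨ w = (1,0) + (1,0))) ∨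
      (∀ w : V3, (w = 0 ∨ w = u ∨ w = u + u) ↔ (w = 0 ∨ w = (0,1) ∨ w = (0,1) + (0,1))) ∨
      (∀ w : V3, (w = 0 ∨ w = u ∨ w = u + u) ↔ (w = 0 ∨ w = (1,1) ∨ w = (1,1) + (1,1))) ∨
      (∀ w : V3, (w = 0 ∨ w = u ∨ w = u + u) ↔ (w = 0 ∨ w = (1,2) ∨ w = (1,2) + (1,2))) := by
    decide
  intro u hu
  rcases d u hu with h | h | h | h
  · exact Or.inl (key _ _ h)
  · exact Or.inr (Or.inl (key _ _ h))
  · exact Or.inr (Or.inr (Or.inl (key _ _ h)))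
  · exact Or.inr (Or.inr (Or.inr (key _ _ h)))

lemma zmultiples_ne_of {u v : V3} (huv : v ∉ zmultiples u) :
    zmultiples u ≠ zmultiples v := by
  intro h
  exact huv (h ▸ mem_zmultiples v)

lemma lines_ne_univ (u : V3) (hu : u ≠ 0) : (zmultiples u : Set V3) ≠ Set.univ := by
  intro h
  have hall : ∀ w : V3, w = 0 ∨ w = u ∨ w = u + u := fun w =>
    mem_zmultiples_iff'.1 ((Set.eq_univ_iff_forall.1 h) w)
  have hex : ∀ u : V3, u ≠ 0 → ∃ w : V3, ¬(w = 0 ∨ w = u ∨ w = u + u) := by decide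
  obtain ⟨w, hw⟩ := hex u hu
  exact hw (hall w)

end Z3


private def mk6 (a b c d e f : Bool) : Fin 4 → Fin 4 → Bool :=
  ![![true,a,b,c], ![a,true,d,e], ![b,d,true,f], ![c,e,f,true]]

set_option maxHeartbeats 2000000 in
private lemma comb6 : ∀ a b c d e f : Bool,
    (∀ i j, ∃ k, ¬ mk6 a b c d e f i k ∧ ¬ mk6 a b c d e f j k) →
    (∀ i j, (∀ k, mk6 a b c d e f i k = mk6 a b c d e f j k) → i = j) →
    ∀ i j, mk6 a b c d e f i j → i = j := by decide

lemma comb (m : Fin 4 → Fin 4 → Bool) (hrefl : ∀ i, m i i) (hsymm : ∀ i j, m i j = m j i)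
    (hcov : ∀ i j, ∃ k, ¬ m i k ∧ ¬ m j k) (hinj : ∀ i j, (∀ k, m i k = m j k) → i = j) :
    ∀ i j, m i j → i = j := by
  have hm : m = mk6 (m 0 1) (m 0 2) (m 0 3) (m 1 2) (m 1 3) (m 2 3) := by
    funext i j
    fin_cases i <;> fin_cases j <;>
      simp [mk6, hrefl, hsymm 1 0, hsymm 2 0, hsymm 3 0, hsymm 2 1, hsymm 3 1, hsymm 3 2]
  rw [hm] at hcov hinj ⊢
  exact comb6 _ _ _ _ _ _ hcov hinj


lemma fin4_arith (a b c d n : ℕ) (ha : 2 ≤ a) (hb : 2 ≤ b) (hc : 2 ≤ c) (hd : 2 ≤ d)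
    (hsum : a + b + c + d = n + 3)
    (hab : a * b ∣ n) (hac : a * c ∣ n) (had : a * d ∣ n)
    (hbc : b * c ∣ n) (hbd : b * d ∣ n) (hcd : c * d ∣ n) :
    a = 3 ∧ b = 3 ∧ c = 3 ∧ d = 3 ∧ n = 9 := by
  have hn : 0 < n := by omega
  have key : ∀ x y z w : ℕ, 2 ≤ x → 2 ≤ y → 2 ≤ z → 2 ≤ w → x + y + z + w = n + 3 →
      x * y ∣ n → x * z ∣ n → x * w ∣ n → x ≤ 3 := by
    intro x y z w hx hy hz hw hs h1 h2 h3
    by_contra hx4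
    push_neg at hx4
    have l1 : x * y ≤ n := Nat.le_of_dvd hn h1
    have l2 : x * z ≤ n := Nat.le_of_dvd hn h2
    have l3 : x * w ≤ n := Nat.le_of_dvd hn h3
    zify at *
    nlinarith [mul_pos (by linarith : (0:ℤ) < x - 3) (by linarith : (0:ℤ) < y + z + w - 3)]
  have ha3 : a ≤ 3 := key a b c d ha hb hc hd hsum hab hac had
  have hb3 : b ≤ 3 := key b a c d hb ha hc hd (by omega)
    (show b * a ∣ n by rwa [mul_comm b a]) hbc hbd
  have hc3 : c ≤ 3 := key c a b d hc ha hb hd (by omega)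
    (show c * a ∣ n by rwa [mul_comm c a]) (show c * b ∣ n by rwa [mul_comm c b]) hcd
  have hd3 : d ≤ 3 := key d a b c hd ha hb hc (by omega)
    (show d * a ∣ n by rwa [mul_comm d a]) (show d * b ∣ n by rwa [mul_comm d b])
    (show d * c ∣ n by rwa [mul_comm d c])
  interval_cases a <;> interval_cases b <;> interval_cases c <;> interval_cases d <;> omega

lemma group_count {V : Type*} [AddCommGroup V] [Finite V] (K : Fin 4 → AddSubgroup V)
    (hdisj : ∀ i j, i ≠ j → ∀ v, v ∈ K i → v ∈ K j → v = 0)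
    (hcov : ∀ v : V, ∃ i, v ∈ K i)
    (hne : ∀ i, ∃ x, x ∈ K i ∧ x ≠ 0) :
    Nonempty (V ≃+ (ZMod 3 × ZMod 3)) := by
  classical
  cases nonempty_fintype V
  -- pairwise products divide the order of V
  have hprod : ∀ i j, i ≠ j → Nat.card (K i) * Nat.card (K j) ∣ Nat.card V := by
    intro i j hij
    have hcard : Nat.card (K i × K j) = Nat.card (K i ⊔ K j : AddSubgroup V) := by
      apply Nat.card_eq_of_bijective
        (fun p => (⟨(p.1 : V) + (p.2 : V),
          AddSubgroup.mem_sup.2 ⟨p.1, p.1.2, p.2, p.2.2, rfl⟩⟩ : (K i ⊔ K j : AddSubgroup V)))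
      constructor
      · rintro ⟨x, y⟩ ⟨x', y'⟩ hxy
        have h1 : (x:V) + y = (x':V) + y' := congrArg Subtype.val hxy
        have h2 : (x:V) - x' = (y':V) - y := by
          rw [sub_eq_sub_iff_add_eq_add, h1, add_comm]
        have h3 : (x:V) - x' ∈ K i := sub_mem x.2 x'.2
        have h4 : (x:V) - x' ∈ K j := h2 ▸ sub_mem y'.2 y.2
        have h5 : (x:V) - (x':V) = 0 := hdisj i j hij _ h3 h4
        have hx : x = x' := Subtype.ext (by rwa [sub_eq_zero] at h5)
        have hy : y = y' := Subtype.ext (by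
          have h6 : (y':V) - y = 0 := h2 ▸ h5
          rw [sub_eq_zero] at h6
          exact h6.symm)
        rw [hx, hy]
      · rintro ⟨v, hv⟩
        obtain ⟨y, hy, z, hz, rfl⟩ := AddSubgroup.mem_sup.1 hv
        exact ⟨(⟨y, hy⟩, ⟨z, hz⟩), rfl⟩
    rw [Nat.card_prod] at hcard
    rw [hcard]
    exact AddSubgroup.card_addSubgroup_dvd_card _
  -- cardinalities
  set n := Nat.card V with hn
  have hNi : ∀ i, ((K i : Set V).toFinset).card = Nat.card (K i) := by
    intro i
    rw [← Set.ncard_eq_toFinset_card', ← Nat.card_coe_set_eq]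
    exact Nat.card_congr (Equiv.setCongr rfl)
  have hpart : (Finset.univ.erase (0:V)).card
      = ∑ i : Fin 4, ((K i : Set V).toFinset.erase 0).card := by
    rw [← Finset.card_biUnion]
    · congr 1
      ext v
      simp only [Finset.mem_erase, Finset.mem_univ, and_true, Finset.mem_biUnion,
        Set.mem_toFinset, SetLike.mem_coe]
      constructor
      · intro hv
        obtain ⟨i, hi⟩ := hcov v
        exact ⟨i, trivial, hv, hi⟩
      · rintro ⟨i, -, hv, -⟩
        exact hv
    · intro i _ j _ hij
      rw [Function.onFun, Finset.disjoint_left]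
      intro v hv hv'
      simp only [Finset.mem_erase, Set.mem_toFinset, SetLike.mem_coe] at hv hv'
      exact hv.1 (hdisj i j hij v hv.2 hv'.2)
  have hcard_erase : ∀ i, ((K i : Set V).toFinset.erase 0).card = Nat.card (K i) - 1 := by
    intro i
    have h0 : (0:V) ∈ (K i : Set V).toFinset := by
      rw [Set.mem_toFinset]
      exact (K i).zero_mem
    rw [Finset.card_erase_of_mem h0, hNi]
  have hcard_univ : (Finset.univ.erase (0:V)).card = n - 1 := by
    rw [Finset.card_erase_of_mem (Finset.mem_univ 0), Finset.card_univ, hn,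
      Nat.card_eq_fintype_card]
  have hge2 : ∀ i, 2 ≤ Nat.card (K i) := by
    intro i
    obtain ⟨x, hx, hx0⟩ := hne i
    rw [← hNi i]
    apply Finset.one_lt_card_iff.2
    exact ⟨x, 0, by simpa using hx, by simpa using (K i).zero_mem, hx0⟩
  have hnpos : 0 < n := Nat.card_pos
  have hsum : Nat.card (K 0) + Nat.card (K 1) + Nat.card (K 2) + Nat.card (K 3) = n + 3 := by
    rw [hcard_univ, Fin.sum_univ_four, hcard_erase, hcard_erase, hcard_erase, hcard_erase]
      at hpart
    have h0 := hge2 0; have h1 := hge2 1; have h2 := hge2 2; have h3 := hge2 3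
    omega
  obtain ⟨e0, e1, e2, e3, hn9⟩ := fin4_arith _ _ _ _ n (hge2 0) (hge2 1) (hge2 2) (hge2 3) hsum
    (hprod 0 1 (by decide)) (hprod 0 2 (by decide)) (hprod 0 3 (by decide))
    (hprod 1 2 (by decide)) (hprod 1 3 (by decide)) (hprod 2 3 (by decide))
  have hN3 : ∀ i, Nat.card (K i) = 3 := by
    intro i
    fin_cases i <;> assumption
  -- exponent 3
  have h3v : ∀ v : V, (3:ℕ) • v = 0 := by
    intro v
    obtain ⟨i, hi⟩ := hcov v
    have hdvd : addOrderOf (⟨v, hi⟩ : K i) ∣ Nat.card (K i) := addOrderOf_dvd_natCard _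
    rw [hN3 i] at hdvd
    have h30 : (3:ℕ) • (⟨v, hi⟩ : K i) = 0 := addOrderOf_dvd_iff_nsmul_eq_zero.1 hdvd
    have := congrArg (Subtype.val) h30
    simpa using this
  letI : Module (ZMod 3) V := AddCommGroup.zmodModule h3v
  haveI : Module.Finite (ZMod 3) V := Module.Finite.of_finite
  have b := Module.finBasis (ZMod 3) V
  have hcardV : n = 3 ^ (Module.finrank (ZMod 3) V) := by
    rw [hn, Nat.card_congr b.equivFun.toEquiv, Nat.card_pi]
    simp [Nat.card_zmod]
  have hd2 : Module.finrank (ZMod 3) V = 2 :=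
    Nat.pow_right_injective (by norm_num)
      (by rw [← hcardV, hn9]; norm_num : (3:ℕ) ^ (Module.finrank (ZMod 3) V) = 3 ^ 2)
  rw [hd2] at b
  exact ⟨b.equivFun.toAddEquiv.trans
    (AddEquiv.mk' (piFinTwoEquiv fun _ => ZMod 3) (fun f g => rfl))⟩

section Forward
open AddSubgroup
variable {R : Type*} [NonUnitalRing R]

lemma forward_dir (e : (R ⧸ centerAddSubgroup R) ≃+ V3) : (Cent R).ncard = 5 := by
  set Z := centerAddSubgroup R with hZ
  let φ : R →+ V3 := e.toAddMonoidHom.comp (QuotientAddGroup.mk' Z)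
  have hφsurj : Function.Surjective φ :=
    e.surjective.comp (QuotientAddGroup.mk'_surjective Z)
  have hφ0 : ∀ r : R, φ r = 0 ↔ r ∈ Z := by
    intro r
    constructor
    · intro h
      have h1 : e ((QuotientAddGroup.mk' Z) r) = 0 := h
      exact (QuotientAddGroup.eq_zero_iff r).1 ((AddEquiv.map_eq_zero_iff e).1 h1)
    · intro h
      have h2 : (QuotientAddGroup.mk' Z) r = 0 := (QuotientAddGroup.eq_zero_iff r).2 h
      show e ((QuotientAddGroup.mk' Z) r) = 0
      rw [h2, map_zero]
  have hφsub : ∀ r s : R, φ r = φ s ↔ r - s ∈ Z := by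
    intro r s
    rw [show φ r = φ s ↔ (QuotientAddGroup.mk' Z) r = (QuotientAddGroup.mk' Z) s from
      ⟨fun h => e.injective h, fun h => congrArg e h⟩]
    exact QuotientAddGroup.eq_iff_sub_mem
  -- key lemma
  have key : ∀ r : R, r ∉ Z → rCentralizer r = φ ⁻¹' (zmultiples (φ r) : Set V3) := by
    intro r hr
    have hTpre : rCentralizer r = φ ⁻¹' ((AddSubgroup.map φ (Csub r)) : Set V3) := by
      ext s
      constructor
      · intro hs
        exact ⟨s, hs, rfl⟩
      · rintro ⟨t, ht, hts⟩
        have h1 : t - s ∈ Z := (hφsub t s).1 hts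
        have h2 : t - s ∈ Csub r := center_subset_C r h1
        have : t - (t - s) ∈ Csub r := (Csub r).sub_mem ht h2
        exact (show s ∈ Csub r by simpa using this)
    have hmem : φ r ∈ AddSubgroup.map φ (Csub r) := ⟨r, self_mem_C r, rfl⟩
    have h0 : φ r ≠ 0 := fun h => hr ((hφ0 r).1 h)
    have hTtop : AddSubgroup.map φ (Csub r) ≠ ⊤ := by
      intro htop
      apply hr
      intro t
      have : t ∈ rCentralizer r := by
        rw [hTpre, htop]
        trivial
      exact (mem_C.1 this).symm
    rw [hTpre, proper_subgroup_eq_zmultiples _ _ hmem h0 hTtop]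
  -- the five centralizers
  have hCent : Cent R = {Set.univ, φ ⁻¹' (zmultiples ((1,0) : V3) : Set V3),
      φ ⁻¹' (zmultiples ((0,1) : V3) : Set V3), φ ⁻¹' (zmultiples ((1,1) : V3) : Set V3),
      φ ⁻¹' (zmultiples ((1,2) : V3) : Set V3)} := by
    ext S
    constructor
    · rintro ⟨r, rfl⟩
      simp only [Set.mem_insert_iff, Set.mem_singleton_iff]
      by_cases hr : r ∈ Z
      · left; exact C_eq_univ_iff.2 hr
      · have h0 : φ r ≠ 0 := fun h => hr ((hφ0 r).1 h)
        rcases lines_classify (φ r) h0 with h | h | h | h <;>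
          rw [key r hr, h]
        · right; left; rfl
        · right; right; left; rfl
        · right; right; right; left; rfl
        · right; right; right; right; rfl
    · intro hS
      simp only [Set.mem_insert_iff, Set.mem_singleton_iff] at hS
      have hline : ∀ u : V3, u ≠ 0 → φ ⁻¹' (zmultiples u : Set V3) ∈ Cent R := by
        intro u hu
        obtain ⟨r, hr⟩ := hφsurj u
        have hrZ : r ∉ Z := fun h => hu (hr ▸ (hφ0 r).2 h)
        exact ⟨r, by show rCentralizer r = _; rw [key r hrZ, hr]⟩
      rcases hS with rfl | rfl | rfl | rfl | rfl
      · exact univ_mem_Cent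
      · exact hline _ (by decide)
      · exact hline _ (by decide)
      · exact hline _ (by decide)
      · exact hline _ (by decide)
  -- distinctness and counting
  have hpre : ∀ u v : V3, φ ⁻¹' (zmultiples u : Set V3) = φ ⁻¹' (zmultiples v : Set V3) ↔
      (zmultiples u : Set V3) = (zmultiples v : Set V3) := fun u v =>
    Set.preimage_eq_preimage hφsurj
  have hpreuniv : ∀ u : V3, u ≠ 0 → Set.univ ≠ φ ⁻¹' (zmultiples u : Set V3) := by
    intro u hu h
    apply lines_ne_univ u hu
    rw [← (Set.preimage_eq_preimage hφsurj (s := (zmultiples u : Set V3)) (t := Set.univ)).1]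
    rw [Set.preimage_univ, ← h]
  have hne : ∀ u v : V3, u ≠ 0 → v ≠ 0 → v ∉ zmultiples u →
      φ ⁻¹' (zmultiples u : Set V3) ≠ φ ⁻¹' (zmultiples v : Set V3) := by
    intro u v hu hv huv h
    exact zmultiples_ne_of huv (SetLike.coe_set_eq.1 ((hpre u v).1 h))
  rw [hCent]
  have d1 : ((0,1) : V3) ∉ zmultiples ((1,0) : V3) := by rw [mem_zmultiples_iff']; decide
  have d2 : ((1,1) : V3) ∉ zmultiples ((1,0) : V3) := by rw [mem_zmultiples_iff']; decide
  have d3 : ((1,2) : V3) ∉ zmultiples ((1,0) : V3) := by rw [mem_zmultiples_iff']; decide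
  have d4 : ((1,1) : V3) ∉ zmultiples ((0,1) : V3) := by rw [mem_zmultiples_iff']; decide
  have d5 : ((1,2) : V3) ∉ zmultiples ((0,1) : V3) := by rw [mem_zmultiples_iff']; decide
  have d6 : ((1,2) : V3) ∉ zmultiples ((1,1) : V3) := by rw [mem_zmultiples_iff']; decide
  have e12 := hne _ _ (by decide) (by decide) d1
  have e13 := hne _ _ (by decide) (by decide) d2
  have e14 := hne _ _ (by decide) (by decide) d3
  have e23 := hne _ _ (by decide) (by decide) d4
  have e24 := hne _ _ (by decide) (by decide) d5
  have e34 := hne _ _ (by decide) (by decide) d6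
  have u1 := hpreuniv ((1,0) : V3) (by decide)
  have u2 := hpreuniv ((0,1) : V3) (by decide)
  have u3 := hpreuniv ((1,1) : V3) (by decide)
  have u4 := hpreuniv ((1,2) : V3) (by decide)
  have n1 : Set.univ ∉ ({⇑φ ⁻¹' ↑(zmultiples ((1,0):V3)), ⇑φ ⁻¹' ↑(zmultiples ((0,1):V3)),
      ⇑φ ⁻¹' ↑(zmultiples ((1,1):V3)), ⇑φ ⁻¹' ↑(zmultiples ((1,2):V3))} : Set (Set R)) := by
    simp only [Set.mem_insert_iff, Set.mem_singleton_iff]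
    push_neg
    exact ⟨u1, u2, u3, u4⟩
  have n2 : ⇑φ ⁻¹' ↑(zmultiples ((1,0):V3)) ∉ ({⇑φ ⁻¹' ↑(zmultiples ((0,1):V3)),
      ⇑φ ⁻¹' ↑(zmultiples ((1,1):V3)), ⇑φ ⁻¹' ↑(zmultiples ((1,2):V3))} : Set (Set R)) := by
    simp only [Set.mem_insert_iff, Set.mem_singleton_iff]
    push_neg
    exact ⟨e12, e13, e14⟩
  have n3 : ⇑φ ⁻¹' ↑(zmultiples ((0,1):V3)) ∉ ({⇑φ ⁻¹' ↑(zmultiples ((1,1):V3)),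
      ⇑φ ⁻¹' ↑(zmultiples ((1,2):V3))} : Set (Set R)) := by
    simp only [Set.mem_insert_iff, Set.mem_singleton_iff]
    push_neg
    exact ⟨e23, e24⟩
  have n4 : ⇑φ ⁻¹' ↑(zmultiples ((1,1):V3)) ∉ ({⇑φ ⁻¹' ↑(zmultiples ((1,2):V3))} : Set (Set R)) := by
    simp only [Set.mem_singleton_iff]
    exact e34
  rw [Set.ncard_insert_of_notMem n1 (Set.toFinite _),
    Set.ncard_insert_of_notMem n2 (Set.toFinite _),
    Set.ncard_insert_of_notMem n3 (Set.toFinite _),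
    Set.ncard_insert_of_notMem n4 (Set.toFinite _),
    Set.ncard_singleton]

end Forward


section Converse
variable {R : Type*} [NonUnitalRing R] [Finite R]

lemma converse_dir (h5 : (Cent R).ncard = 5) :
    Nonempty ((R ⧸ centerAddSubgroup R) ≃+ (ZMod 3 × ZMod 3)) := by
  classical
  set Z := centerAddSubgroup R with hZdef
  have hfin : (Cent R).Finite := Set.toFinite _
  have hDfin : ((Cent R) \ {Set.univ}).Finite := hfin.diff
  have hFcard : hDfin.toFinset.card = 4 := by
    rw [← Set.ncard_eq_toFinset_card, Set.ncard_diff_singleton_of_mem univ_mem_Cent, h5]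
  set F := hDfin.toFinset with hF
  let q := F.equivFin
  let g : Fin 4 → Set R := fun i => (q.symm (Fin.cast hFcard.symm i) : Set R)
  have ginj : Function.Injective g := by
    intro i j hij
    have h1 : q.symm (Fin.cast hFcard.symm i) = q.symm (Fin.cast hFcard.symm j) :=
      Subtype.ext hij
    have h2 := q.symm.injective h1
    have h3 := congrArg Fin.val h2
    exact Fin.ext h3
  have gmem : ∀ i, g i ∈ Cent R ∧ g i ≠ Set.univ := by
    intro i
    have h1 : (g i : Set R) ∈ F := (q.symm (Fin.cast hFcard.symm i)).2
    rw [hF, Set.Finite.mem_toFinset] at h1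
    exact ⟨h1.1, fun h => h1.2 (by rw [h]; rfl)⟩
  have gsurj : ∀ S, S ∈ Cent R → S ≠ Set.univ → ∃ i, g i = S := by
    intro S h1 h2
    have hSF : S ∈ F := by rw [hF, Set.Finite.mem_toFinset]; exact ⟨h1, h2⟩
    refine ⟨Fin.cast hFcard (q ⟨S, hSF⟩), ?_⟩
    show (q.symm (Fin.cast hFcard.symm (Fin.cast hFcard (q ⟨S, hSF⟩))) : Set R) = S
    rw [show Fin.cast hFcard.symm (Fin.cast hFcard (q ⟨S, hSF⟩)) = q ⟨S, hSF⟩ from rfl,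
      Equiv.symm_apply_apply]
  have hachoice : ∀ i, ∃ r : R, rCentralizer r = g i := fun i => (gmem i).1
  choose a ha using hachoice
  have haZ : ∀ i, a i ∉ Z := by
    intro i h
    exact (gmem i).2 (by rw [← ha i]; exact C_eq_univ_iff.2 h)
  have hcomplete : ∀ r : R, r ∉ Z → ∃ k, rCentralizer r = rCentralizer (a k) := by
    intro r hr
    have h1 : rCentralizer r ∈ Cent R := ⟨r, rfl⟩
    have h2 : rCentralizer r ≠ Set.univ := fun h => hr (C_eq_univ_iff.1 h)
    obtain ⟨i, hi⟩ := gsurj _ h1 h2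
    exact ⟨i, by rw [← hi, ha i]⟩
  -- no two centralizers cover R
  have hcov2 : ∀ i j : Fin 4, ∃ r : R, r ∉ rCentralizer (a i) ∧ r ∉ rCentralizer (a j) := by
    intro i j
    have hi : rCentralizer (a i) ≠ Set.univ := by rw [ha i]; exact (gmem i).2
    have hj : rCentralizer (a j) ≠ Set.univ := by rw [ha j]; exact (gmem j).2
    obtain ⟨x, hx⟩ : ∃ x, x ∉ rCentralizer (a i) := by
      by_contra hc
      push_neg at hc
      exact hi (Set.eq_univ_iff_forall.2 hc)
    obtain ⟨y, hy⟩ : ∃ y, y ∉ rCentralizer (a j) := by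
      by_contra hc
      push_neg at hc
      exact hj (Set.eq_univ_iff_forall.2 hc)
    by_cases hxj : x ∈ rCentralizer (a j)
    · by_cases hyi : y ∈ rCentralizer (a i)
      · refine ⟨x + y, fun hmem => ?_, fun hmem => ?_⟩
        · exact hx (show x ∈ Csub (a i) by simpa using (Csub (a i)).sub_mem hmem hyi)
        · have h2 := (Csub (a j)).sub_mem hmem hxj
          exact hy (show y ∈ Csub (a j) by simpa using h2)
      · exact ⟨y, hyi, hy⟩
    · exact ⟨x, hx, hxj⟩
  let m : Fin 4 → Fin 4 → Bool := fun i j => decide (a i ∈ rCentralizer (a j))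
  have hrefl : ∀ i, m i i := fun i => decide_eq_true (self_mem_C (a i))
  have hsymm : ∀ i j, m i j = m j i := by
    intro i j
    simp only [m, decide_eq_decide]
    exact C_symm
  have hkey : ∀ (r : R), r ∉ Z → ∀ k, rCentralizer r = rCentralizer (a k) →
      ∀ i, (m i k = true ↔ r ∈ rCentralizer (a i)) := by
    intro r _ k hk i
    constructor
    · intro hm
      have h1 : a i ∈ rCentralizer (a k) := of_decide_eq_true hm
      rw [← hk] at h1
      exact C_symm.1 h1
    · intro hmem
      have h1 : a i ∈ rCentralizer r := C_symm.1 hmem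
      rw [hk] at h1
      exact decide_eq_true h1
  have hcovm : ∀ i j, ∃ k, ¬ m i k ∧ ¬ m j k := by
    intro i j
    obtain ⟨r, hri, hrj⟩ := hcov2 i j
    have hrZ : r ∉ Z := fun h => hri (center_subset_C _ h)
    obtain ⟨k, hk⟩ := hcomplete r hrZ
    exact ⟨k, fun hm => hri ((hkey r hrZ k hk i).1 hm),
      fun hm => hrj ((hkey r hrZ k hk j).1 hm)⟩
  have hinjm : ∀ i j, (∀ k, m i k = m j k) → i = j := by
    intro i j hmk
    by_contra hij
    have hgne : rCentralizer (a i) ≠ rCentralizer (a j) := by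
      rw [ha i, ha j]
      exact fun h => hij (ginj h)
    have hx : ∃ r : R, ¬(r ∈ rCentralizer (a i) ↔ r ∈ rCentralizer (a j)) := by
      by_contra hc
      push_neg at hc
      exact hgne (Set.ext hc)
    obtain ⟨r, hr⟩ := hx
    by_cases hri : r ∈ rCentralizer (a i)
    · have hrj : r ∉ rCentralizer (a j) := fun hj => hr ⟨fun _ => hj, fun _ => hri⟩
      have hrZ : r ∉ Z := fun h => hrj (center_subset_C _ h)
      obtain ⟨k, hkk⟩ := hcomplete r hrZ
      have h1 : m i k := (hkey r hrZ k hkk i).2 hri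
      have h2 : ¬ m j k := fun hm => hrj ((hkey r hrZ k hkk j).1 hm)
      rw [hmk k] at h1
      exact h2 h1
    · have hrj : r ∈ rCentralizer (a j) := by
        by_contra hrj
        exact hr ⟨fun h => absurd h hri, fun h => absurd h hrj⟩
      have hrZ : r ∉ Z := fun h => hri (center_subset_C _ h)
      obtain ⟨k, hkk⟩ := hcomplete r hrZ
      have h1 : m j k := (hkey r hrZ k hkk j).2 hrj
      have h2 : ¬ m i k := fun hm => hri ((hkey r hrZ k hkk i).1 hm)
      rw [← hmk k] at h1
      exact h2 h1
  have hconc := comb m hrefl hsymm hcovm hinjm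
  have hpair : ∀ i j : Fin 4, i ≠ j → ∀ r : R,
      r ∈ rCentralizer (a i) → r ∈ rCentralizer (a j) → r ∈ Z := by
    intro i j hij r hri hrj
    by_contra hrZ
    obtain ⟨k, hk⟩ := hcomplete r hrZ
    have h1 : m i k := (hkey r hrZ k hk i).2 hri
    have h2 : m j k := (hkey r hrZ k hk j).2 hrj
    exact hij ((hconc i k h1).trans (hconc j k h2).symm)
  -- pass to the quotient
  let π := QuotientAddGroup.mk' Z
  haveI : Finite (R ⧸ Z) := Finite.of_surjective π (QuotientAddGroup.mk'_surjective Z)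
  let K : Fin 4 → AddSubgroup (R ⧸ Z) := fun i => AddSubgroup.map π (Csub (a i))
  have hdisj : ∀ i j, i ≠ j → ∀ v, v ∈ K i → v ∈ K j → v = 0 := by
    intro i j hij v hvi hvj
    obtain ⟨r, hr, hrv⟩ := hvi
    obtain ⟨r', hr', hrv'⟩ := hvj
    have hsub : r - r' ∈ Z := (QuotientAddGroup.eq_iff_sub_mem).1 (hrv.trans hrv'.symm)
    have hrj : r ∈ rCentralizer (a j) := by
      have h2 := center_subset_C (a j) hsub
      have h3 := (Csub (a j)).add_mem hr' h2
      exact (show r ∈ Csub (a j) by simpa using h3)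
    have hrZ : r ∈ Z := hpair i j hij r hr hrj
    rw [← hrv]
    exact (QuotientAddGroup.eq_zero_iff r).2 hrZ
  have hcovK : ∀ v : R ⧸ Z, ∃ i, v ∈ K i := by
    intro v
    obtain ⟨r, rfl⟩ := QuotientAddGroup.mk'_surjective Z v
    by_cases hrZ : r ∈ Z
    · exact ⟨0, ⟨r, center_subset_C _ hrZ, rfl⟩⟩
    · obtain ⟨k, hk⟩ := hcomplete r hrZ
      have h1 : r ∈ rCentralizer (a k) := hk ▸ self_mem_C r
      exact ⟨k, ⟨r, h1, rfl⟩⟩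
  have hneK : ∀ i, ∃ x, x ∈ K i ∧ x ≠ 0 := by
    intro i
    refine ⟨π (a i), ⟨a i, self_mem_C _, rfl⟩, fun h0 => ?_⟩
    exact haZ i ((QuotientAddGroup.eq_zero_iff _).1 h0)
  exact group_count K hdisj hcovK hneK

end Converse

/-- A finite ring has exactly `5` centralizers iff `R/Z(R) ≅ ℤ_3 × ℤ_3`
as additive groups. -/
theorem five_centralizer_iff (R : Type*) [NonUnitalRing R] [Finite R] :
    (Cent R).ncard = 5 ↔
      Nonempty ((R ⧸ centerAddSubgroup R) ≃+ (ZMod 3 × ZMod 3)) := by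
  constructor
  · exact converse_dir
  · rintro ⟨e⟩
    exact forward_dir e
end
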